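/- Tong's second theorem: Let f : ℝ → ℝ be continuous on the closed interval [a,b] (with a < b) and differentiable on the open interval (a,b). Then there exists a point η ∈ (a,b) such that f'(η) = (f(η) - f(a))/(η - a) + (6 · (A_f(a,b) - I_f(a,b))/(b-a)²) · (η - a). -/

import Mathlib

open intervalIntegral in
/-- **Tong's second theorem.** Let `f` be continuous on `[a,b]` and differentiable on
`(a,b)` with derivative `f'`. Then there exists `η ∈ (a,b)` with
`f'(η) = (f(η)-f(a))/(η-a) + (6(A_f(a,b) - I_f(a,b))/(b-a)²)·(η-a)`, where
`A_f(a,b) = (f(a)+f(b))/2` and `I_f(a,b) = (1/(b-a)) ∫_a^b f`. -/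
theorem tong_second_theorem (f f' : ℝ → ℝ) (a b : ℝ) (hab : a < b)
    (hfc : ContinuousOn f (Set.Icc a b))
    (hf : ∀ x ∈ Set.Ioo a b, HasDerivAt f (f' x) x) :
    ∃ η ∈ Set.Ioo a b, f' η = (f η - f a) / (η - a) +
      6 * ((f a + f b) / 2 - (1 / (b - a)) * ∫ t in a..b, f t) / (b - a) ^ 2 * (η - a) := by
  have hba : b - a ≠ 0 := sub_ne_zero.mpr hab.ne'
  have huIcc : Set.uIcc a b = Set.Icc a b := Set.uIcc_of_le hab.le
  have hInt : IntervalIntegrable f MeasureTheory.volume a b := by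
    apply ContinuousOn.intervalIntegrable
    rwa [huIcc]
  set K : ℝ := ((b - a) * (f a + f b) - 2 * ∫ t in a..b, f t) / (b - a) ^ 3 with hK
  set g : ℝ → ℝ := fun x => (x - a) * (f x + f a) - 2 * (∫ t in a..x, f t) - K * (x - a) ^ 3
    with hg
  set g' : ℝ → ℝ := fun x => (x - a) * f' x - (f x - f a) - 3 * K * (x - a) ^ 2 with hg'
  have hFc : ContinuousOn (fun x => ∫ t in a..x, f t) (Set.Icc a b) := by
    rw [← huIcc]
    apply intervalIntegral.continuousOn_primitive_interval
    rw [huIcc]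
    exact hfc.integrableOn_Icc
  have hgc : ContinuousOn g (Set.Icc a b) := by
    apply ContinuousOn.sub
    apply ContinuousOn.sub
    · exact ((continuousOn_id.sub continuousOn_const).mul
        (hfc.add continuousOn_const))
    · exact continuousOn_const.mul hFc
    · exact (continuousOn_const.mul
        (((continuousOn_id.sub continuousOn_const)).pow 3))
  have hgd : ∀ x ∈ Set.Ioo a b, HasDerivAt g (g' x) x := by
    intro x hx
    have hInt' : IntervalIntegrable f MeasureTheory.volume a x :=
      hInt.mono_set (by rw [huIcc, Set.uIcc_of_le hx.1.le]; exact Set.Icc_subset_Icc le_rfl hx.2.le)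
    have hcx : ContinuousAt f x :=
      hfc.continuousAt (Icc_mem_nhds hx.1 hx.2)
    have hF : HasDerivAt (fun u => ∫ t in a..u, f t) (f x) x :=
      intervalIntegral.integral_hasDerivAt_right hInt'
        ((hfc.mono Set.Ioo_subset_Icc_self).stronglyMeasurableAtFilter isOpen_Ioo x hx) hcx
    have h1 : HasDerivAt (fun u => (u - a) * (f u + f a))
        (1 * (f x + f a) + (x - a) * f' x) x :=
      ((hasDerivAt_id x).sub_const a).mul ((hf x hx).add_const (f a))
    have h2 : HasDerivAt (fun u => K * (u - a) ^ 3) (K * (3 * (x - a) ^ 2 * 1)) x :=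
      (((hasDerivAt_id x).sub_const a).pow 3).const_mul K
    have := ((h1.sub (hF.const_mul 2)).sub h2)
    refine this.congr_deriv ?_
    simp only [hg']
    ring
  have hgab : g a = g b := by
    have : g a = 0 := by simp [hg]
    rw [this, hg]
    simp only
    rw [hK]
    field_simp
    ring
  obtain ⟨η, hη, hη0⟩ := exists_hasDerivAt_eq_zero hab hgc hgab hgd
  refine ⟨η, hη, ?_⟩
  have hηa : η - a ≠ 0 := sub_ne_zero.mpr hη.1.ne'
  have hK3 : 6 * ((f a + f b) / 2 - (1 / (b - a)) * ∫ t in a..b, f t) / (b - a) ^ 2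
      = 3 * K := by
    rw [hK]; field_simp; ring
  rw [hK3]
  have : (η - a) * f' η - (f η - f a) - 3 * K * (η - a) ^ 2 = 0 := hη0
  field_simp at this ⊢
  linarith [this]
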